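/- Any two infinite finitely generated abelian groups A and B have a common upper bound for the preforming relation: there exists n : ℕ such that A ⊑ ℤ^n and B ⊑ ℤ^n, where ℤ^n denotes the free abelian group Fin n → ℤ. (Consequently, the restriction of ⊑ to infinite finitely generated abelian groups is a net.) -/

import Mathlib

/-- `G` preforms `H` (written `G ⊑ H` in the paper). -/
def Preforms (G : Type*) (H : Type*) [Group G] [Group H] : Prop :=
  ∃ (k : ℕ) (t : Fin k → H), Subgroup.closure (Set.range t) = ⊤ ∧
    ∀ R : ℕ, ∃ s : Fin k → G, Subgroup.closure (Set.range s) = ⊤ ∧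
      ∀ w : FreeGroup (Fin k), (FreeGroup.toWord w).length ≤ R →
        (FreeGroup.lift s w = 1 ↔ FreeGroup.lift t w = 1)


lemma digits_lemma (R : ℕ) : ∀ (n : ℕ) (c : ℕ → ℤ), (∀ i, |c i| ≤ R) →
    (∑ i ∈ Finset.range n, ((2*R+2 : ℕ) : ℤ)^i * c i) = 0 → ∀ i < n, c i = 0 := by
  intro n
  induction n with
  | zero => intro c _ _ i hi; omega
  | succ n ih =>
    intro c hc hsum i hi
    set N : ℤ := ((2*R+2 : ℕ) : ℤ) with hN
    have hN2 : (2 : ℤ) ≤ N := by rw [hN]; push_cast; omega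
    have hsplit : (∑ i ∈ Finset.range (n+1), N^i * c i)
        = (∑ i ∈ Finset.range n, N^(i+1) * c (i+1)) + N^0 * c 0 :=
      Finset.sum_range_succ' _ n
    have hfac : (∑ i ∈ Finset.range n, N^(i+1) * c (i+1))
        = N * ∑ i ∈ Finset.range n, N^i * c (i+1) := by
      rw [Finset.mul_sum]; apply Finset.sum_congr rfl; intro j _; ring
    rw [hsplit, hfac, pow_zero, one_mul] at hsum
    have hdvd : N ∣ c 0 := ⟨-(∑ i ∈ Finset.range n, N^i * c (i+1)), by linear_combination hsum⟩
    have hc0 : c 0 = 0 := by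
      rcases hdvd with ⟨q, hq⟩
      rcases eq_or_ne q 0 with h | h
      · simp [hq, h]
      · exfalso
        have hq0 : 0 < |q| := abs_pos.mpr h
        have h2 : N ≤ |c 0| := by
          rw [hq, abs_mul, abs_of_nonneg (by omega : (0:ℤ) ≤ N)]
          nlinarith
        have h3 := hc 0
        have h4 : (0:ℤ) ≤ R := Int.natCast_nonneg R
        omega
    have hS : (∑ i ∈ Finset.range n, N^i * c (i+1)) = 0 := by
      rw [hc0, add_zero] at hsum
      exact (mul_eq_zero.mp hsum).resolve_left (by omega)
    rcases Nat.eq_zero_or_pos i with h | h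
    · rw [h]; exact hc0
    · obtain ⟨j, rfl⟩ : ∃ j, i = j + 1 := ⟨i-1, by omega⟩
      exact ih (fun k => c (k+1)) (fun k => hc (k+1)) hS j (by omega)

lemma abs_lift_le {α : Type*} [DecidableEq α] (f : α → Multiplicative ℤ)
    (hf : ∀ j, |Multiplicative.toAdd (f j)| ≤ 1)
    (w : FreeGroup α) : |Multiplicative.toAdd (FreeGroup.lift f w)| ≤ (FreeGroup.toWord w).length := by
  conv_lhs => rw [← FreeGroup.mk_toWord (x := w)]
  rw [FreeGroup.lift_mk]
  generalize FreeGroup.toWord w = L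
  induction L with
  | nil => simp
  | cons hd tl ih =>
    rw [List.map_cons, List.prod_cons, toAdd_mul]
    have h1 : |Multiplicative.toAdd (cond hd.2 (f hd.1) (f hd.1)⁻¹)| ≤ 1 := by
      cases hd.2
      · simpa using hf hd.1
      · simpa using hf hd.1
    calc |Multiplicative.toAdd (cond hd.2 (f hd.1) (f hd.1)⁻¹) +
          Multiplicative.toAdd (List.prod (tl.map fun x => cond x.2 (f x.1) (f x.1)⁻¹))|
        ≤ _ + _ := abs_add_le _ _
      _ ≤ 1 + tl.length := add_le_add h1 ih
      _ = ((hd :: tl).length : ℤ) := by simp; ring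


lemma exists_hom_to_int (A : Type*) [CommGroup A] [Infinite A] (hA : Group.FG A) :
    ∃ (π : A →* Multiplicative ℤ) (x : A), π x = Multiplicative.ofAdd 1 := by
  haveI : AddGroup.FG (Additive A) := GroupFG.iff_add_fg.mp hA
  obtain ⟨r, ι, fι, p, hp, e, ⟨f⟩⟩ := AddCommGroup.equiv_free_prod_directSum_zmod (Additive A)
  haveI : ∀ i, NeZero (p i ^ e i) := fun i => ⟨pow_ne_zero _ (hp i).pos.ne'⟩
  haveI := Classical.decEq ι
  haveI : Finite (DirectSum ι fun i => ZMod (p i ^ e i)) := by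
    unfold DirectSum; infer_instance
  have hr : 0 < r := by
    by_contra h
    push_neg at h
    interval_cases r
    haveI : Finite (Fin 0 →₀ ℤ) := by
      haveI : Subsingleton (Fin 0 →₀ ℤ) := by
        constructor; intro a b; ext i; exact absurd i.2 (by omega)
      infer_instance
    haveI : Finite (Additive A) := Finite.of_equiv _ f.toEquiv.symm
    haveI : Finite A := Finite.of_equiv (Additive A) Additive.toMul
    exact not_finite A
  let i0 : Fin r := ⟨0, hr⟩
  let π' : Additive A →+ ℤ :=
    (Finsupp.applyAddHom i0).comp ((AddMonoidHom.fst _ _).comp f.toAddMonoidHom)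
  refine ⟨MonoidHom.mk' (fun a => Multiplicative.ofAdd (π' (Additive.ofMul a)))
      (by intro a b; simp [map_add]),
    Additive.toMul (f.symm (Finsupp.single i0 1, 0)), ?_⟩
  simp only [MonoidHom.mk'_apply]
  have : π' (f.symm (Finsupp.single i0 1, 0)) = 1 := by
    simp [π', Finsupp.single_eq_same]
  rw [show Additive.ofMul (Additive.toMul (f.symm (Finsupp.single i0 1, 0)))
      = f.symm (Finsupp.single i0 1, 0) from rfl, this]

lemma main_preforms {A : Type*} [CommGroup A] {m : ℕ} (g : Fin m → A)
    (hg : Subgroup.closure (Set.range g) = ⊤) (π : A →* Multiplicative ℤ) (x : A)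
    (hx : π x = Multiplicative.ofAdd 1) {n : ℕ} (hn : m + 1 ≤ n) :
    Preforms A (Fin n → Multiplicative ℤ) := by
  classical
  set t : Fin n → (Fin n → Multiplicative ℤ) :=
    fun i j => if i = j then Multiplicative.ofAdd (1:ℤ) else 1 with ht_def
  set a : Fin n → (FreeGroup (Fin n) →* Multiplicative ℤ) :=
    fun i => (Pi.evalMonoidHom (fun _ => Multiplicative ℤ) i).comp (FreeGroup.lift t) with ha_def
  have ha_eval : ∀ i w, a i w = FreeGroup.lift t w i := fun i w => rfl
  have ha_of : ∀ i j, a i (FreeGroup.of j) = if j = i then Multiplicative.ofAdd (1:ℤ) else 1 := by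
    intro i j
    rw [ha_eval, FreeGroup.lift_apply_of]
  have ht1 : ∀ w : FreeGroup (Fin n), (FreeGroup.lift t w = 1 ↔ ∀ i, a i w = 1) := by
    intro w
    rw [funext_iff]
    exact ⟨fun h i => h i, fun h i => h i⟩
  have ht_top : Subgroup.closure (Set.range t) = ⊤ := by
    rw [eq_top_iff]
    intro v _
    have hv : v = ∏ i : Fin n, (t i) ^ (Multiplicative.toAdd (v i)) := by
      funext j
      rw [Finset.prod_apply]
      have h1 : ∀ i : Fin n, (t i ^ Multiplicative.toAdd (v i)) j
          = if i = j then Multiplicative.ofAdd (Multiplicative.toAdd (v i)) else 1 := by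
        intro i
        simp only [ht_def, Pi.pow_apply]
        split
        · rw [← ofAdd_zsmul]; simp
        · simp
      rw [Finset.prod_congr rfl (fun i _ => h1 i), Finset.prod_ite_eq' Finset.univ j
        (fun i => Multiplicative.ofAdd (Multiplicative.toAdd (v i)))]
      simp
    rw [hv]
    exact Subgroup.prod_mem _ fun i _ =>
      Subgroup.zpow_mem _ (Subgroup.subset_closure (Set.mem_range_self i)) _
  refine ⟨n, t, ht_top, ?_⟩
  intro R
  set N : ℕ := 2*R+2 with hN
  set c : Fin m → ℤ := fun j => Multiplicative.toAdd (π (g j)) with hc_def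
  set g' : Fin m → A := fun j => g j * x ^ (-(c j)) with hg'_def
  have hπg' : ∀ j, π (g' j) = 1 := by
    intro j
    apply Multiplicative.toAdd.injective
    simp [hg'_def, hx, hc_def, toAdd_zpow]
  set s : Fin n → A := fun i =>
    (if h : 0 < (i : ℕ) ∧ (i : ℕ) ≤ m then g' ⟨(i:ℕ) - 1, by omega⟩ else 1) *
      x ^ ((N : ℤ) ^ (i : ℕ)) with hs_def
  have hs_eval : ∀ (i : Fin n) (h : 0 < (i:ℕ) ∧ (i:ℕ) ≤ m),
      s i = g' ⟨(i:ℕ) - 1, by omega⟩ * x ^ ((N : ℤ) ^ (i : ℕ)) := by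
    intro i h
    simp only [hs_def]
    rw [dif_pos h]
  have hπs : ∀ i, π (s i) = Multiplicative.ofAdd ((N:ℤ) ^ (i:ℕ)) := by
    intro i
    simp only [hs_def]
    rw [map_mul, map_zpow, hx]
    have h1 : π (if h : 0 < (i : ℕ) ∧ (i : ℕ) ≤ m then g' ⟨(i:ℕ) - 1, by omega⟩ else 1) = 1 := by
      split
      · rw [hπg']
      · exact map_one π
    rw [h1, one_mul, ← ofAdd_zsmul]
    simp
  have hxmem : x ∈ Subgroup.closure (Set.range s) := by
    have h0 : s ⟨0, by omega⟩ = x := by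
      simp only [hs_def]
      simp
    rw [← h0]
    exact Subgroup.subset_closure (Set.mem_range_self _)
  have hs_top : Subgroup.closure (Set.range s) = ⊤ := by
    rw [eq_top_iff, ← hg, Subgroup.closure_le]
    rintro _ ⟨j, rfl⟩
    set jn : Fin n := ⟨(j:ℕ)+1, by omega⟩ with hjn
    have hj1 : (jn : ℕ) = (j:ℕ)+1 := rfl
    have hcond : 0 < (jn : ℕ) ∧ (jn : ℕ) ≤ m := by
      rw [hj1]
      have := j.isLt
      constructor <;> omega
    have he : (⟨(jn : ℕ) - 1, by omega⟩ : Fin m) = j := by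
      ext
      simp [hj1]
    have hkey : g j = s jn * x ^ (c j - (N:ℤ) ^ ((j:ℕ)+1)) := by
      rw [hs_eval jn hcond, he, hj1]
      simp only [hg'_def]
      group
    rw [hkey]
    exact SetLike.mem_coe.mpr (mul_mem (Subgroup.subset_closure (Set.mem_range_self jn))
      (Subgroup.zpow_mem _ hxmem _))
  set Φ : FreeGroup (Fin n) →* A :=
    { toFun := fun w => ∏ i : Fin n, s i ^ (Multiplicative.toAdd (a i w))
      map_one' := by simp
      map_mul' := by
        intro u v
        rw [← Finset.prod_mul_distrib]
        exact Finset.prod_congr rfl fun i _ => by rw [map_mul, toAdd_mul, zpow_add] } with hΦ_def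
  have hΦapp : ∀ w, FreeGroup.lift s w = ∏ i : Fin n, s i ^ (Multiplicative.toAdd (a i w)) := by
    have h9 : (FreeGroup.lift s : FreeGroup (Fin n) →* A) = Φ := by
      apply FreeGroup.ext_hom
      intro j
      rw [FreeGroup.lift_apply_of]
      have h8 : Φ (FreeGroup.of j) = ∏ i : Fin n, s i ^ (Multiplicative.toAdd (a i (FreeGroup.of j))) := rfl
      rw [h8]
      have h1 : ∀ i : Fin n, s i ^ (Multiplicative.toAdd (a i (FreeGroup.of j)))
          = if j = i then s i else 1 := by
        intro i
        rw [ha_of]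
        split <;> simp
      rw [Finset.prod_congr rfl (fun i _ => h1 i), Finset.prod_ite_eq Finset.univ j s]
      simp
    intro w
    rw [h9]
    rfl
  have hπw : ∀ w : FreeGroup (Fin n), π (FreeGroup.lift s w)
      = Multiplicative.ofAdd (∑ i : Fin n, ((N:ℕ) : ℤ)^(i:ℕ) * Multiplicative.toAdd (a i w)) := by
    intro w
    rw [hΦapp, map_prod]
    have h1 : ∀ i : Fin n, π (s i ^ (Multiplicative.toAdd (a i w)))
        = Multiplicative.ofAdd (((N:ℕ):ℤ)^(i:ℕ) * Multiplicative.toAdd (a i w)) := by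
      intro i
      rw [map_zpow, hπs, ← ofAdd_zsmul, smul_eq_mul, mul_comm]
    rw [Finset.prod_congr rfl (fun i _ => h1 i)]
    exact (ofAdd_sum _ _).symm
  have hbound : ∀ (i : Fin n) (w : FreeGroup (Fin n)), (FreeGroup.toWord w).length ≤ R →
      |Multiplicative.toAdd (a i w)| ≤ (R:ℤ) := by
    intro i w hw
    have hcomp : a i w = FreeGroup.lift (fun j => t j i) w := by
      have h1 : (Pi.evalMonoidHom (fun _ => Multiplicative ℤ) i).comp
          (FreeGroup.lift t) = FreeGroup.lift (fun j => t j i) := by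
        apply FreeGroup.ext_hom
        intro j
        simp [FreeGroup.lift_apply_of]
      exact DFunLike.congr_fun h1 w
    rw [hcomp]
    refine le_trans (abs_lift_le _ ?_ w) (by exact_mod_cast hw)
    intro j
    by_cases hij : j = i <;> simp [ht_def, hij]
  refine ⟨s, hs_top, ?_⟩
  intro w hw
  constructor
  · intro h1
    rw [ht1]
    have h2 := congrArg π h1
    rw [map_one, hπw] at h2
    have h3 := congrArg Multiplicative.toAdd h2
    simp only [toAdd_ofAdd, toAdd_one] at h3
    set cc : ℕ → ℤ := fun k => if h : k < n then Multiplicative.toAdd (a ⟨k, h⟩ w) else 0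
      with hcc_def
    have h4 : (∑ i ∈ Finset.range n, ((2*R+2 : ℕ) : ℤ)^i * cc i) = 0 := by
      rw [← Fin.sum_univ_eq_sum_range (fun k => ((2*R+2 : ℕ) : ℤ)^k * cc k) n, ← h3]
      apply Finset.sum_congr rfl
      intro i _
      have h5 : cc (i:ℕ) = Multiplicative.toAdd (a i w) := by
        simp only [hcc_def]
        rw [dif_pos i.isLt]
      rw [h5]
    have h5 : ∀ k, |cc k| ≤ (R:ℤ) := by
      intro k
      simp only [hcc_def]
      split
      · exact hbound _ w hw
      · simp
    have h6 := digits_lemma R n cc h5 h4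
    intro i
    have h7 := h6 (i : ℕ) i.isLt
    simp only [hcc_def] at h7
    rw [dif_pos i.isLt] at h7
    have h8 : Multiplicative.toAdd (a i w) = 0 := h7
    rw [← ofAdd_toAdd (a i w), h8]
    rfl
  · intro h2
    rw [ht1] at h2
    rw [hΦapp]
    apply Finset.prod_eq_one
    intro i _
    rw [h2 i]
    simp


lemma exists_fin_generators (A : Type*) [Group A] (hA : Group.FG A) :
    ∃ (m : ℕ) (g : Fin m → A), Subgroup.closure (Set.range g) = ⊤ := by
  obtain ⟨m, S, hcard, hS⟩ := Group.fg_iff'.mp hA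
  refine ⟨S.card, fun i => (S.equivFin.symm i : A), ?_⟩
  have hr : Set.range (fun i => ((S.equivFin.symm i : S) : A)) = (S : Set A) := by
    rw [show (fun i => ((S.equivFin.symm i : S) : A))
        = (fun y : S => (y : A)) ∘ S.equivFin.symm from rfl, Set.range_comp,
      Equiv.range_eq_univ, Set.image_univ]
    ext y
    simp
  rw [hr, hS]

/-- Any two infinite finitely generated abelian groups have a common upper bound of the
form `ℤ^n` for the preforming relation; hence `⊑` restricted to infinite finitely
generated abelian groups is a net. -/
theorem abelian_common_upper_bound
    (A B : Type*) [CommGroup A] [CommGroup B] [Infinite A] [Infinite B]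
    (hA : Group.FG A) (hB : Group.FG B) :
    ∃ n : ℕ, Preforms A (Fin n → Multiplicative ℤ) ∧
      Preforms B (Fin n → Multiplicative ℤ) := by
  obtain ⟨mA, gA, hgA⟩ := exists_fin_generators A hA
  obtain ⟨mB, gB, hgB⟩ := exists_fin_generators B hB
  obtain ⟨πA, xA, hxA⟩ := exists_hom_to_int A hA
  obtain ⟨πB, xB, hxB⟩ := exists_hom_to_int B hB
  exact ⟨max (mA + 1) (mB + 1),
    main_preforms gA hgA πA xA hxA (le_max_left _ _),
    main_preforms gB hgB πB xB hxB (le_max_right _ _)⟩
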